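/- Let X be a 0-dimensional space, let P, K be compact subsets of X × ℕ^ℕ, let f : P → K be a homeomorphism, and let g be an autohomeomorphism of X with g ∘ π_X = π_X ∘ f. For x ∈ P_X = π_X(P), let Φ(x) be the set of all autohomeomorphisms h of ℕ^ℕ such that f(x, c) = (g(x), h(c)) for every c with (x, c) ∈ P. Then the set-valued map Φ : P_X ⇒ H(ℕ^ℕ) is lower semi-continuous: for every open subset W of H(ℕ^ℕ), the set {x ∈ P_X : Φ(x) ∩ W ≠ ∅} is open in P_X. -/

import Mathlib

open Topology Set

/-- A space is *0-dimensional* if it admits a dense topological embedding into a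
compact Hausdorff totally disconnected space (a compactification of covering dimension 0). -/
def ZeroDimensional (Y : Type u) [TopologicalSpace Y] : Prop :=
  ∃ (Z : Type u) (_ : TopologicalSpace Z), CompactSpace Z ∧ T2Space Z ∧
    TotallyDisconnectedSpace Z ∧ ∃ e : Y → Z, Topology.IsEmbedding e ∧ DenseRange e

/-- The metric `d̃(h, h') = sup_c d(h(c), h'(c)) + sup_c d(h⁻¹(c), h'⁻¹(c))` on the
autohomeomorphism group of `ℕ^ℕ`, built from a (bounded) metric `d` on `ℕ^ℕ`. -/
noncomputable def dTilde (d : (ℕ → ℕ) → (ℕ → ℕ) → ℝ)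
    (h h' : (ℕ → ℕ) ≃ₜ (ℕ → ℕ)) : ℝ :=
  (⨆ c : ℕ → ℕ, d (h c) (h' c)) + (⨆ c : ℕ → ℕ, d (h.symm c) (h'.symm c))

namespace Stmt8Aux

variable {α β : Type*} [TopologicalSpace α] [DiscreteTopology α]
  [TopologicalSpace β] [DiscreteTopology β]

/-- Every open set in a product of discrete spaces contains a cylinder around each point. -/
lemma exists_cylinder_subset {E : ℕ → Type*} [∀ n, TopologicalSpace (E n)]
    [∀ n, DiscreteTopology (E n)] {U : Set (∀ n, E n)} (hU : IsOpen U) {x : ∀ n, E n}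
    (hx : x ∈ U) : ∃ n, PiNat.cylinder x n ⊆ U := by
  obtain ⟨v, ⟨y, n, rfl⟩, hxv, hvU⟩ :=
    (PiNat.isTopologicalBasis_cylinders E).exists_subset_of_mem_open hx hU
  exact ⟨n, (PiNat.mem_cylinder_iff_eq.1 hxv) ▸ hvU⟩

/-- A continuous map on a compact subset of a product of discrete spaces, with discrete target,
factors through a finite level. -/
lemma exists_level {A : Set (ℕ → α)} (hA : IsCompact A) {q : (ℕ → α) → β}
    (hq : ContinuousOn q A) :
    ∃ m, ∀ a ∈ A, ∀ a' ∈ A, (∀ j < m, a j = a' j) → q a = q a' := by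
  -- for each a, find a cylinder on which q is constant on A
  have H : ∀ a ∈ A, ∃ m, ∀ a' ∈ A, a' ∈ PiNat.cylinder a m → q a' = q a := by
    intro a ha
    have h2 : q ⁻¹' {q a} ∈ 𝓝[A] a :=
      hq a ha ((isOpen_discrete ({q a} : Set β)).mem_nhds rfl)
    rcases mem_nhdsWithin.1 h2 with ⟨U, hUo, haU, hUA⟩
    rcases exists_cylinder_subset hUo haU with ⟨m, hm⟩
    exact ⟨m, fun a' ha' hc => hUA ⟨hm hc, ha'⟩⟩
  choose! m hm using H
  rcases hA.elim_nhds_subcover (fun a => PiNat.cylinder a (m a))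
    (fun a ha => (PiNat.isOpen_cylinder _ _ _).mem_nhds (PiNat.self_mem_cylinder _ _)) with
    ⟨t, htA, hcov⟩
  classical
  refine ⟨(t.sup m) , fun a ha a' ha' hagree => ?_⟩
  rcases Set.mem_iUnion₂.1 (hcov ha) with ⟨b, hbt, hab⟩
  have hb : b ∈ A := htA b hbt
  have h1 : a ∈ PiNat.cylinder b (m b) := hab
  have h2 : a' ∈ PiNat.cylinder b (m b) := by
    intro j hj
    have hjm : j < t.sup m := lt_of_lt_of_le hj (Finset.le_sup hbt)
    rw [← hagree j hjm]; exact h1 j hj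
  rw [hm b hb a ha h1, hm b hb a' ha' h2]


section B
variable {α β : Type*} [TopologicalSpace α] [DiscreteTopology α]
  [TopologicalSpace β] [DiscreteTopology β]

/-- Extension of a single discrete-valued continuous function from a compact set. -/
lemma ce1 [Nonempty β] {A : Set (ℕ → α)} (hA : IsCompact A) {q : (ℕ → α) → β}
    (hq : ContinuousOn q A)
    (hlevel : ∃ m, ∀ a ∈ A, ∀ a' ∈ A, (∀ j < m, a j = a' j) → q a = q a') :
    ∃ Q : (ℕ → α) → β, Continuous Q ∧ Set.EqOn Q q A := by
  classical
  obtain ⟨m, hm⟩ := hlevel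
  set b₀ : β := Classical.arbitrary β
  set Q : (ℕ → α) → β := fun z =>
    if h : ∃ a ∈ A, ∀ j < m, z j = a j then q h.choose else b₀ with hQ
  have key : ∀ z z' : ℕ → α, (∀ j < m, z j = z' j) → Q z = Q z' := by
    intro z z' hzz
    by_cases h : ∃ a ∈ A, ∀ j < m, z j = a j
    · have h' : ∃ a ∈ A, ∀ j < m, z' j = a j := by
        obtain ⟨a, ha, hag⟩ := h
        exact ⟨a, ha, fun j hj => (hzz j hj) ▸ hag j hj⟩
      rw [hQ]; simp only [dif_pos h, dif_pos h']
      exact hm _ h.choose_spec.1 _ h'.choose_spec.1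
        (fun j hj => by rw [← h.choose_spec.2 j hj, hzz j hj, h'.choose_spec.2 j hj])
    · have h' : ¬ ∃ a ∈ A, ∀ j < m, z' j = a j := by
        intro hc; exact h (by obtain ⟨a, ha, hag⟩ := hc; exact ⟨a, ha, fun j hj => (hzz j hj).symm ▸ hag j hj⟩)
      rw [hQ]; simp only [dif_neg h, dif_neg h']
  refine ⟨Q, ?_, ?_⟩
  · rw [continuous_iff_continuousAt]
    intro z
    have : Q =ᶠ[𝓝 z] (fun _ => Q z) := by
      filter_upwards [(PiNat.isOpen_cylinder (fun _ : ℕ => α) z m).mem_nhds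
        (PiNat.self_mem_cylinder z m)] with w hw
      exact (key z w (fun j hj => (hw j hj).symm)).symm
    exact (continuousAt_const (y := Q z)).congr this.symm
  · intro a ha
    have h : ∃ a' ∈ A, ∀ j < m, a j = a' j := ⟨a, ha, fun _ _ => rfl⟩
    rw [hQ]; simp only [dif_pos h]
    exact hm _ h.choose_spec.1 _ ha fun j hj => (h.choose_spec.2 j hj).symm

/-- Extension of a continuous map from a compact subset of `ℕ → α` to `ℕ → β`. -/
lemma ce [Nonempty β] {A : Set (ℕ → α)} (hA : IsCompact A) {f : (ℕ → α) → (ℕ → β)}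
    (hf : ContinuousOn f A) :
    ∃ g : (ℕ → α) → (ℕ → β), Continuous g ∧ Set.EqOn g f A := by
  have H : ∀ i : ℕ, ∃ Q : (ℕ → α) → β, Continuous Q ∧ Set.EqOn Q (fun z => f z i) A := by
    intro i
    have hqi : ContinuousOn (fun z => f z i) A := (continuous_apply i).comp_continuousOn hf
    exact ce1 hA hqi (exists_level hA hqi)
  choose Q hQc hQe using H
  refine ⟨fun z i => Q i z, continuous_pi hQc, fun a ha => funext fun i => hQe i ha⟩

end B

section INV
variable {X Y : Type*} [TopologicalSpace X] [TopologicalSpace Y] [T2Space Y]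

/-- Continuous inverse of an injective continuous map on a compact set. -/
lemma inv_exists [Nonempty X] {A : Set X} (hA : IsCompact A) {ψ : X → Y}
    (hc : ContinuousOn ψ A) (hi : Set.InjOn ψ A) :
    ∃ φ : Y → X, ContinuousOn φ (ψ '' A) ∧ ∀ a ∈ A, φ (ψ a) = a := by
  classical
  have : CompactSpace ↥A := isCompact_iff_compactSpace.1 hA
  set e : ↥A ≃ ↥(ψ '' A) := Equiv.Set.imageOfInjOn ψ A hi
  have hce : Continuous e := by
    apply Continuous.subtype_mk
    exact hc.restrict
  set E : ↥A ≃ₜ ↥(ψ '' A) := Continuous.homeoOfEquivCompactToT2 (f := e) hce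
  refine ⟨fun y => if h : y ∈ ψ '' A then (E.symm ⟨y, h⟩ : X) else Classical.arbitrary X, ?_, ?_⟩
  · rw [continuousOn_iff_continuous_restrict]
    have : (ψ '' A).domRestrict (fun y => if h : y ∈ ψ '' A then (E.symm ⟨y, h⟩ : X)
        else Classical.arbitrary X) = fun y => (E.symm y : X) := by
      funext y; exact dif_pos y.2
    rw [this]
    exact continuous_subtype_val.comp E.symm.continuous
  · intro a ha
    have h : ψ a ∈ ψ '' A := ⟨a, ha, rfl⟩
    simp only [dif_pos h]
    have : (⟨ψ a, h⟩ : ↥(ψ '' A)) = E ⟨a, ha⟩ := rfl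
    rw [this, Homeomorph.symm_apply_apply]
end INV


section MoveIn
open Classical in
/-- Any bijection-extension lemma on `ℤ × ℤ`: a finite set of "second coordinates" can be
sent to second coordinate `0` by a bijection of `ℤ × ℤ`. -/
lemma exists_equiv_snd_zero {F : Set ℤ} (hF : F.Finite) (h0 : (0 : ℤ) ∈ F) :
    ∃ t : ℤ × ℤ ≃ ℤ × ℤ, ∀ p : ℤ × ℤ, p.2 ∈ F → (t p).2 = 0 := by
  classical
  have hinf1 : Infinite {p : ℤ × ℤ // p.2 ∈ F} :=
    Infinite.of_injective (fun z : ℤ => ⟨(z, 0), h0⟩)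
      (fun a b hab => by simpa [Prod.ext_iff] using hab)
  have hinf3 : Infinite {p : ℤ × ℤ // p.2 = 0} :=
    Infinite.of_injective (fun z : ℤ => ⟨(z, 0), rfl⟩)
      (fun a b hab => by simpa [Prod.ext_iff] using hab)
  obtain ⟨b, hb⟩ : ∃ b : ℤ, b ∉ F := (hF.infinite_compl).nonempty
  have hinf2 : Infinite {p : ℤ × ℤ // ¬ p.2 ∈ F} :=
    Infinite.of_injective (fun z : ℤ => ⟨(z, b), hb⟩)
      (fun a b hab => by simpa [Prod.ext_iff] using hab)
  have hinf4 : Infinite {p : ℤ × ℤ // ¬ p.2 = 0} :=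
    Infinite.of_injective (fun z : ℤ => ⟨(z, 1), one_ne_zero⟩)
      (fun a b hab => by simpa [Prod.ext_iff] using hab)
  obtain ⟨D1⟩ := nonempty_denumerable {p : ℤ × ℤ // p.2 ∈ F}
  obtain ⟨D2⟩ := nonempty_denumerable {p : ℤ × ℤ // ¬ p.2 ∈ F}
  obtain ⟨D3⟩ := nonempty_denumerable {p : ℤ × ℤ // p.2 = 0}
  obtain ⟨D4⟩ := nonempty_denumerable {p : ℤ × ℤ // ¬ p.2 = 0}
  set e1 : {p : ℤ × ℤ // p.2 ∈ F} ≃ {p : ℤ × ℤ // p.2 = 0} :=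
    (@Denumerable.eqv _ D1).trans (@Denumerable.eqv _ D3).symm
  set e2 : {p : ℤ × ℤ // ¬ p.2 ∈ F} ≃ {p : ℤ × ℤ // ¬ p.2 = 0} :=
    (@Denumerable.eqv _ D2).trans (@Denumerable.eqv _ D4).symm
  refine ⟨(Equiv.sumCompl (fun p : ℤ × ℤ => p.2 ∈ F)).symm.trans
    ((e1.sumCongr e2).trans (Equiv.sumCompl (fun p : ℤ × ℤ => p.2 = 0))), ?_⟩
  intro p hp
  have h1 : (Equiv.sumCompl (fun p : ℤ × ℤ => p.2 ∈ F)).symm p = Sum.inl ⟨p, hp⟩ :=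
    Equiv.sumCompl_symm_apply_of_pos (p := fun q : ℤ × ℤ => q.2 ∈ F) (a := p) hp
  simp only [Equiv.trans_apply, h1, Equiv.sumCongr_apply, Sum.map_inl,
    Equiv.sumCompl_apply_inl]
  exact (e1 ⟨p, hp⟩).2

/-- An equivalence of discrete spaces as a homeomorphism. -/
def discHomeo {A B : Type*} [TopologicalSpace A] [DiscreteTopology A]
    [TopologicalSpace B] [DiscreteTopology B] (e : A ≃ B) : A ≃ₜ B :=
  ⟨e, continuous_of_discreteTopology, continuous_of_discreteTopology⟩

/-- Pairing homeomorphism `(ℕ → ℤ) × (ℕ → ℤ) ≃ₜ (ℕ → ℤ × ℤ)`. -/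
def lamHomeo : ((ℕ → ℤ) × (ℕ → ℤ)) ≃ₜ (ℕ → ℤ × ℤ) where
  toFun := fun p i => (p.1 i, p.2 i)
  invFun := fun w => (fun i => (w i).1, fun i => (w i).2)
  left_inv := fun p => rfl
  right_inv := fun w => rfl
  continuous_toFun := continuous_pi fun i =>
    ((continuous_apply i).comp continuous_fst).prodMk ((continuous_apply i).comp continuous_snd)
  continuous_invFun :=
    (continuous_pi fun i => (continuous_apply i).fst).prodMk
      (continuous_pi fun i => (continuous_apply i).snd)

/-- Any compact subset of `(ℕ → ℤ) × (ℕ → ℤ)` can be moved into the first factor by an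
autohomeomorphism. -/
lemma move_in {C : Set ((ℕ → ℤ) × (ℕ → ℤ))} (hC : IsCompact C) :
    ∃ A : ((ℕ → ℤ) × (ℕ → ℤ)) ≃ₜ ((ℕ → ℤ) × (ℕ → ℤ)), ∀ c ∈ C, (A c).2 = 0 := by
  classical
  have hC2 : IsCompact (Prod.snd '' C) := hC.image continuous_snd
  have hFi : ∀ i : ℕ, (((fun z : ℕ → ℤ => z i) '' (Prod.snd '' C)) ∪ {0}).Finite := by
    intro i
    exact ((hC2.image (continuous_apply i)).finite_of_discrete).union (Set.finite_singleton 0)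
  have h0i : ∀ i : ℕ, (0 : ℤ) ∈ ((fun z : ℕ → ℤ => z i) '' (Prod.snd '' C)) ∪ {0} :=
    fun i => Or.inr rfl
  choose t ht using fun i => exists_equiv_snd_zero (hFi i) (h0i i)
  refine ⟨lamHomeo.trans ((Homeomorph.piCongrRight (fun i => discHomeo (t i))).trans
    lamHomeo.symm), ?_⟩
  intro c hc
  have : ∀ i, (t i (c.1 i, c.2 i)).2 = 0 := fun i =>
    ht i (c.1 i, c.2 i) (Or.inl ⟨c.2, ⟨c, hc, rfl⟩, rfl⟩)
  funext i
  exact this i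

/-- The even/odd interleaving homeomorphism `(ℕ → ℤ) ≃ₜ (ℕ → ℤ) × (ℕ → ℤ)`. -/
def interleave : (ℕ → ℤ) ≃ₜ ((ℕ → ℤ) × (ℕ → ℤ)) where
  toFun := fun x => (fun i => x (2 * i), fun i => x (2 * i + 1))
  invFun := fun p k => if k % 2 = 0 then p.1 (k / 2) else p.2 (k / 2)
  left_inv := by
    intro x; funext k
    by_cases h : k % 2 = 0 <;> simp only [h, if_true, if_false, reduceIte] <;>
      · congr 1; omega
  right_inv := by
    intro p
    refine Prod.ext (funext fun i => ?_) (funext fun i => ?_)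
    · have h : (2 * i) % 2 = 0 := by omega
      have h2 : (2 * i) / 2 = i := by omega
      simp only [h, h2, reduceIte]
    · have h : ¬ ((2 * i + 1) % 2 = 0) := by omega
      have h2 : (2 * i + 1) / 2 = i := by omega
      simp only [h, h2, reduceIte]
  continuous_toFun :=
    (continuous_pi fun i => continuous_apply (2 * i)).prodMk
      (continuous_pi fun i => continuous_apply (2 * i + 1))
  continuous_invFun := continuous_pi fun k => by
    by_cases h : k % 2 = 0
    · simp only [h, reduceIte]; exact (continuous_apply (k / 2)).comp continuous_fst
    · simp only [h, reduceIte]; exact (continuous_apply (k / 2)).comp continuous_snd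

end MoveIn


section E0
/-- Shear homeomorphisms of `(ℕ → ℤ) × (ℕ → ℤ)`. -/
def shear1 {φ : (ℕ → ℤ) → (ℕ → ℤ)} (hφ : Continuous φ) :
    ((ℕ → ℤ) × (ℕ → ℤ)) ≃ₜ ((ℕ → ℤ) × (ℕ → ℤ)) where
  toFun := fun p => (p.1, p.2 + φ p.1)
  invFun := fun p => (p.1, p.2 - φ p.1)
  left_inv := fun p => by simp
  right_inv := fun p => by simp
  continuous_toFun := continuous_fst.prodMk (continuous_snd.add (hφ.comp continuous_fst))
  continuous_invFun := continuous_fst.prodMk (continuous_snd.sub (hφ.comp continuous_fst))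

def shear2 {θ : (ℕ → ℤ) → (ℕ → ℤ)} (hθ : Continuous θ) :
    ((ℕ → ℤ) × (ℕ → ℤ)) ≃ₜ ((ℕ → ℤ) × (ℕ → ℤ)) where
  toFun := fun p => (p.1 - θ p.2, p.2)
  invFun := fun p => (p.1 + θ p.2, p.2)
  left_inv := fun p => by simp
  right_inv := fun p => by simp
  continuous_toFun := (continuous_fst.sub (hθ.comp continuous_snd)).prodMk continuous_snd
  continuous_invFun := (continuous_fst.add (hθ.comp continuous_snd)).prodMk continuous_snd

/-- Every injective continuous map on a compact subset of `ℕ → ℤ` extends to an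
autohomeomorphism. -/
lemma e0_int {A : Set (ℕ → ℤ)} (hA : IsCompact A) {ψ : (ℕ → ℤ) → (ℕ → ℤ)}
    (hc : ContinuousOn ψ A) (hi : Set.InjOn ψ A) :
    ∃ Ψ : (ℕ → ℤ) ≃ₜ (ℕ → ℤ), ∀ a ∈ A, Ψ a = ψ a := by
  classical
  have hB : IsCompact (ψ '' A) := hA.image_of_continuousOn hc
  obtain ⟨ψinv, hψinv_c, hψinv⟩ := inv_exists hA hc hi
  obtain ⟨α, hα⟩ := move_in (hA.image interleave.continuous)
  obtain ⟨β, hβ⟩ := move_in (hB.image interleave.continuous)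
  set u : (ℕ → ℤ) → (ℕ → ℤ) := fun x => interleave.symm (α.symm (x, 0)) with hu
  set v : (ℕ → ℤ) → (ℕ → ℤ) := fun y => interleave.symm (β.symm (y, 0)) with hv
  have hu_c : Continuous u := interleave.symm.continuous.comp
    (α.symm.continuous.comp (continuous_id.prodMk continuous_const))
  have hv_c : Continuous v := interleave.symm.continuous.comp
    (β.symm.continuous.comp (continuous_id.prodMk continuous_const))
  have hux : ∀ x, α (interleave (u x)) = (x, 0) := by
    intro x
    show α (interleave (interleave.symm (α.symm (x, 0)))) = (x, 0)
    rw [Homeomorph.apply_symm_apply, Homeomorph.apply_symm_apply]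
  have hvy : ∀ y, β (interleave (v y)) = (y, 0) := by
    intro y
    show β (interleave (interleave.symm (β.symm (y, 0)))) = (y, 0)
    rw [Homeomorph.apply_symm_apply, Homeomorph.apply_symm_apply]
  set A' : Set (ℕ → ℤ) := u ⁻¹' A with hA'
  set B' : Set (ℕ → ℤ) := v ⁻¹' (ψ '' A) with hB'
  have hA'_eq : A' = Prod.fst '' (α '' (interleave '' A)) := by
    apply Set.Subset.antisymm
    · intro x hx
      exact ⟨α (interleave (u x)), ⟨interleave (u x), ⟨u x, hx, rfl⟩, rfl⟩, by rw [hux x]⟩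
    · rintro x ⟨p, ⟨q, ⟨a, ha, rfl⟩, rfl⟩, rfl⟩
      have h2 : (α (interleave a)).2 = 0 := hα _ ⟨a, ha, rfl⟩
      have : α (interleave a) = ((α (interleave a)).1, 0) := by
        rw [← h2]
      show u (α (interleave a)).1 ∈ A
      show interleave.symm (α.symm ((α (interleave a)).1, 0)) ∈ A
      rw [← this, Homeomorph.symm_apply_apply, Homeomorph.symm_apply_apply]
      exact ha
  have hB'_eq : B' = Prod.fst '' (β '' (interleave '' (ψ '' A))) := by
    apply Set.Subset.antisymm
    · intro y hy
      exact ⟨β (interleave (v y)), ⟨interleave (v y), ⟨v y, hy, rfl⟩, rfl⟩, by rw [hvy y]⟩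
    · rintro y ⟨p, ⟨q, ⟨b, hb, rfl⟩, rfl⟩, rfl⟩
      have h2 : (β (interleave b)).2 = 0 := hβ _ ⟨b, hb, rfl⟩
      have : β (interleave b) = ((β (interleave b)).1, 0) := by rw [← h2]
      show v (β (interleave b)).1 ∈ ψ '' A
      show interleave.symm (β.symm ((β (interleave b)).1, 0)) ∈ ψ '' A
      rw [← this, Homeomorph.symm_apply_apply, Homeomorph.symm_apply_apply]
      exact hb
  have hA'c : IsCompact A' := by
    rw [hA'_eq]
    exact ((hA.image interleave.continuous).image α.continuous).image continuous_fst
  have hB'c : IsCompact B' := by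
    rw [hB'_eq]
    exact ((hB.image interleave.continuous).image β.continuous).image continuous_fst
  set ρ : (ℕ → ℤ) → (ℕ → ℤ) := fun x => (β (interleave (ψ (u x)))).1 with hρ
  set σ : (ℕ → ℤ) → (ℕ → ℤ) := fun y => (α (interleave (ψinv (v y)))).1 with hσ
  have hρ_c : ContinuousOn ρ A' := by
    have h1 : ContinuousOn (fun x => ψ (u x)) A' :=
      hc.comp hu_c.continuousOn (fun x hx => hx)
    exact (continuous_fst.comp (β.continuous.comp
      interleave.continuous)).comp_continuousOn h1
  have hσ_c : ContinuousOn σ B' := by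
    have h1 : ContinuousOn (fun y => ψinv (v y)) B' :=
      hψinv_c.comp hv_c.continuousOn (fun y hy => hy)
    exact (continuous_fst.comp (α.continuous.comp
      interleave.continuous)).comp_continuousOn h1
  have key1 : ∀ x ∈ A', β (interleave (ψ (u x))) = (ρ x, 0) := by
    intro x hx
    exact Prod.ext rfl (hβ _ ⟨ψ (u x), ⟨u x, hx, rfl⟩, rfl⟩)
  have keyv : ∀ x ∈ A', v (ρ x) = ψ (u x) := by
    intro x hx
    show interleave.symm (β.symm (ρ x, 0)) = ψ (u x)
    rw [← key1 x hx, Homeomorph.symm_apply_apply, Homeomorph.symm_apply_apply]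
  have key2 : ∀ x ∈ A', ρ x ∈ B' := by
    intro x hx
    show v (ρ x) ∈ ψ '' A
    rw [keyv x hx]
    exact ⟨u x, hx, rfl⟩
  have key3 : ∀ x ∈ A', σ (ρ x) = x := by
    intro x hx
    show (α (interleave (ψinv (v (ρ x))))).1 = x
    rw [keyv x hx, hψinv (u x) hx, hux x]
  obtain ⟨φ, hφc, hφe⟩ := ce hA'c hρ_c
  obtain ⟨θ, hθc, hθe⟩ := ce hB'c hσ_c
  set Ffull := (shear1 hφc).trans ((shear2 hθc).trans (Homeomorph.prodComm _ _)) with hFfull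
  refine ⟨interleave.trans (α.trans (Ffull.trans (β.symm.trans interleave.symm))), ?_⟩
  intro a ha
  set x : ℕ → ℤ := (α (interleave a)).1 with hx_def
  have heq2 : α (interleave a) = (x, 0) := Prod.ext rfl (hα _ ⟨a, ha, rfl⟩)
  have hua : u x = a := by
    show interleave.symm (α.symm (x, 0)) = a
    rw [← heq2, Homeomorph.symm_apply_apply, Homeomorph.symm_apply_apply]
  have hxA' : x ∈ A' := by
    show u x ∈ A
    rw [hua]; exact ha
  have hF : Ffull (x, 0) = (ρ x, 0) := by
    show (Homeomorph.prodComm _ _) ((shear2 hθc) ((shear1 hφc) (x, 0))) = (ρ x, 0)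
    have e1 : (shear1 hφc) (x, 0) = (x, ρ x) := by
      show (x, 0 + φ x) = (x, ρ x)
      rw [zero_add, hφe hxA']
    have e2 : (shear2 hθc) (x, ρ x) = (0, ρ x) := by
      show (x - θ (ρ x), ρ x) = (0, ρ x)
      rw [hθe (key2 x hxA'), key3 x hxA', sub_self]
    rw [e1, e2]
    rfl
  show interleave.symm (β.symm (Ffull (α (interleave a)))) = ψ a
  rw [heq2, hF]
  have hb : β.symm (ρ x, 0) = interleave (ψ (u x)) := by
    rw [← key1 x hxA', Homeomorph.symm_apply_apply]
  rw [hb, Homeomorph.symm_apply_apply, hua]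
end E0


section E0Z
/-- Every injective continuous map on a compact subset of `ℕ → ℕ` extends to an
autohomeomorphism. -/
lemma e0 {A : Set (ℕ → ℕ)} (hA : IsCompact A) {ψ : (ℕ → ℕ) → (ℕ → ℕ)}
    (hc : ContinuousOn ψ A) (hi : Set.InjOn ψ A) :
    ∃ Ψ : (ℕ → ℕ) ≃ₜ (ℕ → ℕ), ∀ a ∈ A, Ψ a = ψ a := by
  classical
  set e : (ℕ → ℕ) ≃ₜ (ℕ → ℤ) :=
    Homeomorph.piCongrRight (fun _ : ℕ => discHomeo Equiv.intEquivNat.symm) with he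
  have hAG : IsCompact (e '' A) := hA.image e.continuous
  set ψG : (ℕ → ℤ) → (ℕ → ℤ) := fun z => e (ψ (e.symm z)) with hψG
  have hcG : ContinuousOn ψG (e '' A) := by
    have h1 : ContinuousOn (fun z => ψ (e.symm z)) (e '' A) :=
      hc.comp e.symm.continuous.continuousOn
        (fun z hz => by obtain ⟨a, ha, rfl⟩ := hz; simpa using ha)
    exact e.continuous.comp_continuousOn h1
  have hiG : Set.InjOn ψG (e '' A) := by
    rintro z₁ ⟨a₁, ha₁, rfl⟩ z₂ ⟨a₂, ha₂, rfl⟩ hz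
    have : ψ (e.symm (e a₁)) = ψ (e.symm (e a₂)) := e.injective hz
    rw [Homeomorph.symm_apply_apply, Homeomorph.symm_apply_apply] at this
    rw [hi ha₁ ha₂ this]
  obtain ⟨Ψg, hΨg⟩ := e0_int hAG hcG hiG
  refine ⟨e.trans (Ψg.trans e.symm), fun a ha => ?_⟩
  show e.symm (Ψg (e a)) = ψ a
  rw [hΨg (e a) ⟨a, ha, rfl⟩]
  show e.symm (e (ψ (e.symm (e a)))) = ψ a
  rw [Homeomorph.symm_apply_apply, Homeomorph.symm_apply_apply]
end E0Z

section Glue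

/-- The cylinder coded by `t : ℕ × (ℕ → ℕ)`. -/
def cellSet (t : ℕ × (ℕ → ℕ)) : Set (ℕ → ℕ) := {w | ∀ j < t.1, w j = t.2 j}

lemma isOpen_cellSet (t : ℕ × (ℕ → ℕ)) : IsOpen (cellSet t) := by
  have : cellSet t = ⋂ j ∈ Finset.range t.1, (fun w : ℕ → ℕ => w j) ⁻¹' {t.2 j} := by
    ext w; simp [cellSet]
  rw [this]
  exact isOpen_biInter_finset fun j _ => (continuous_apply j).isOpen_preimage _ (isOpen_discrete _)

lemma isClosed_cellSet (t : ℕ × (ℕ → ℕ)) : IsClosed (cellSet t) := by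
  have : cellSet t = ⋂ j ∈ Finset.range t.1, (fun w : ℕ → ℕ => w j) ⁻¹' {t.2 j} := by
    ext w; simp [cellSet]
  rw [this]
  exact isClosed_iInter fun j => isClosed_iInter fun _ =>
    IsClosed.preimage (continuous_apply j) (isClosed_discrete _)

def prependC (t : ℕ × (ℕ → ℕ)) (z : ℕ → ℕ) : ℕ → ℕ :=
  fun j => if j < t.1 then t.2 j else z (j - t.1)

def dropC (m : ℕ) (z : ℕ → ℕ) : ℕ → ℕ := fun j => z (j + m)

lemma continuous_prependC (t : ℕ × (ℕ → ℕ)) : Continuous (prependC t) := by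
  refine continuous_pi fun j => ?_
  unfold prependC
  split_ifs
  · exact continuous_const
  · exact continuous_apply _

lemma continuous_dropC (m : ℕ) : Continuous (dropC m) :=
  continuous_pi fun j => continuous_apply _

lemma dropC_prependC (t : ℕ × (ℕ → ℕ)) (z : ℕ → ℕ) : dropC t.1 (prependC t z) = z := by
  funext j
  show (if j + t.1 < t.1 then t.2 (j + t.1) else z (j + t.1 - t.1)) = z j
  rw [if_neg (by omega)]
  congr 1
  omega

lemma prependC_dropC {t : ℕ × (ℕ → ℕ)} {z : ℕ → ℕ} (hz : z ∈ cellSet t) :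
    prependC t (dropC t.1 z) = z := by
  funext j
  show (if j < t.1 then t.2 j else z (j - t.1 + t.1)) = z j
  by_cases h : j < t.1
  · rw [if_pos h, (hz j h)]
  · rw [if_neg h]
    congr 1
    omega

lemma prependC_mem (t : ℕ × (ℕ → ℕ)) (z : ℕ → ℕ) : prependC t z ∈ cellSet t := by
  intro j hj
  exact if_pos hj

/-- Gluing extensions cell-by-cell over a locally constant "code". -/
lemma glue_extension (code : (ℕ → ℕ) → ℕ × (ℕ → ℕ))
    (hC1 : ∀ z, z ∈ cellSet (code z))
    (hC2 : ∀ z w, w ∈ cellSet (code z) → code w = code z)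
    {A : Set (ℕ → ℕ)} (hA : IsCompact A) {ψ : (ℕ → ℕ) → (ℕ → ℕ)}
    (hc : ContinuousOn ψ A) (hi : Set.InjOn ψ A)
    (hpres : ∀ a ∈ A, code (ψ a) = code a) :
    ∃ Ψ : (ℕ → ℕ) ≃ₜ (ℕ → ℕ), (∀ a ∈ A, Ψ a = ψ a) ∧ ∀ z, code (Ψ z) = code z := by
  classical
  have hclopen : ∀ t, IsClosed {z | code z = t} := by
    intro t
    rw [← isOpen_compl_iff, isOpen_iff_mem_nhds]
    intro z hz
    rw [mem_nhds_iff]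
    refine ⟨cellSet (code z), fun w hw => ?_, isOpen_cellSet _, hC1 z⟩
    simp only [Set.mem_compl_iff, Set.mem_setOf_eq]
    rw [hC2 z w hw]
    exact hz
  have hEX : ∀ t : ℕ × (ℕ → ℕ), ∃ Φ : (ℕ → ℕ) ≃ₜ (ℕ → ℕ),
      ∀ a ∈ A, code a = t → Φ (dropC t.1 a) = dropC t.1 (ψ a) := by
    intro t
    set D : Set (ℕ → ℕ) := A ∩ {z | code z = t} with hD
    have hDc : IsCompact D := hA.inter_right (hclopen t)
    have hDcell : ∀ a ∈ D, a ∈ cellSet t := fun a ha => ha.2 ▸ hC1 a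
    have hDψcell : ∀ a ∈ D, ψ a ∈ cellSet t := by
      intro a ha
      have := hpres a ha.1
      have h2 : code (ψ a) = t := by rw [this, ha.2]
      exact h2 ▸ hC1 (ψ a)
    set At : Set (ℕ → ℕ) := dropC t.1 '' D with hAt
    have hAtc : IsCompact At := hDc.image (continuous_dropC t.1)
    set ψt : (ℕ → ℕ) → (ℕ → ℕ) := fun z => dropC t.1 (ψ (prependC t z)) with hψt
    have hmaps : ∀ z ∈ At, prependC t z ∈ D := by
      rintro z ⟨a, ha, rfl⟩
      rw [prependC_dropC (hDcell a ha)]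
      exact ha
    have hψtc : ContinuousOn ψt At := by
      have h1 : ContinuousOn (fun z => ψ (prependC t z)) At :=
        hc.comp (continuous_prependC t).continuousOn (fun z hz => (hmaps z hz).1)
      exact (continuous_dropC t.1).comp_continuousOn h1
    have hψti : Set.InjOn ψt At := by
      rintro z₁ hz₁ z₂ hz₂ hz
      obtain ⟨a₁, ha₁, rfl⟩ := hz₁
      obtain ⟨a₂, ha₂, rfl⟩ := hz₂
      have e₁ : prependC t (dropC t.1 a₁) = a₁ := prependC_dropC (hDcell a₁ ha₁)
      have e₂ : prependC t (dropC t.1 a₂) = a₂ := prependC_dropC (hDcell a₂ ha₂)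
      have : dropC t.1 (ψ a₁) = dropC t.1 (ψ a₂) := by
        have := hz
        simp only [hψt] at this
        rwa [e₁, e₂] at this
      have hψeq : ψ a₁ = ψ a₂ := by
        rw [← prependC_dropC (hDψcell a₁ ha₁), ← prependC_dropC (hDψcell a₂ ha₂), this]
      rw [hi ha₁.1 ha₂.1 hψeq]
    obtain ⟨Φ, hΦ⟩ := e0 hAtc hψtc hψti
    refine ⟨Φ, fun a ha hcode => ?_⟩
    have haD : a ∈ D := ⟨ha, hcode⟩
    have := hΦ (dropC t.1 a) ⟨a, haD, rfl⟩
    rw [this]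
    show dropC t.1 (ψ (prependC t (dropC t.1 a))) = dropC t.1 (ψ a)
    rw [prependC_dropC (hDcell a haD)]
  choose F hF using hEX
  set Ψf : (ℕ → ℕ) → (ℕ → ℕ) :=
    fun z => prependC (code z) (F (code z) (dropC (code z).1 z)) with hΨf
  set Ψi : (ℕ → ℕ) → (ℕ → ℕ) :=
    fun z => prependC (code z) ((F (code z)).symm (dropC (code z).1 z)) with hΨi
  have hfpres : ∀ z, code (Ψf z) = code z := fun z => hC2 z _ (prependC_mem _ _)
  have hipres : ∀ z, code (Ψi z) = code z := fun z => hC2 z _ (prependC_mem _ _)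
  have hli : ∀ z, Ψi (Ψf z) = z := by
    intro z
    have h1 := hfpres z
    show prependC (code (Ψf z)) ((F (code (Ψf z))).symm (dropC (code (Ψf z)).1 (Ψf z))) = z
    rw [h1]
    show prependC (code z) ((F (code z)).symm
      (dropC (code z).1 (prependC (code z) (F (code z) (dropC (code z).1 z))))) = z
    rw [dropC_prependC, Homeomorph.symm_apply_apply, prependC_dropC (hC1 z)]
  have hri : ∀ z, Ψf (Ψi z) = z := by
    intro z
    have h1 := hipres z
    show prependC (code (Ψi z)) (F (code (Ψi z)) (dropC (code (Ψi z)).1 (Ψi z))) = z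
    rw [h1]
    show prependC (code z) (F (code z)
      (dropC (code z).1 (prependC (code z) ((F (code z)).symm (dropC (code z).1 z))))) = z
    rw [dropC_prependC, Homeomorph.apply_symm_apply, prependC_dropC (hC1 z)]
  have hcont : ∀ (G : (ℕ × (ℕ → ℕ)) → (ℕ → ℕ) → (ℕ → ℕ)),
      (∀ t, Continuous (G t)) → Continuous (fun z => prependC (code z) (G (code z) z)) := by
    intro G hG
    rw [continuous_iff_continuousAt]
    intro z₀
    have hopen : IsOpen (cellSet (code z₀)) := isOpen_cellSet _
    have hmem : z₀ ∈ cellSet (code z₀) := hC1 z₀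
    have hglob : Continuous (fun z => prependC (code z₀) (G (code z₀) z)) :=
      (continuous_prependC _).comp (hG (code z₀))
    apply hglob.continuousAt.congr
    filter_upwards [hopen.mem_nhds hmem] with w hw
    rw [hC2 z₀ w hw]
  have hcf : Continuous Ψf := by
    have := hcont (fun t z => F t (dropC t.1 z))
      (fun t => (F t).continuous.comp (continuous_dropC t.1))
    exact this
  have hci : Continuous Ψi := by
    have := hcont (fun t z => (F t).symm (dropC t.1 z))
      (fun t => (F t).symm.continuous.comp (continuous_dropC t.1))
    exact this
  refine ⟨⟨⟨Ψf, Ψi, hli, hri⟩, hcf, hci⟩, fun a ha => ?_, hfpres⟩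
  show prependC (code a) (F (code a) (dropC (code a).1 a)) = ψ a
  rw [hF (code a) a ha rfl]
  have : ψ a ∈ cellSet (code a) := (hpres a ha) ▸ hC1 (ψ a)
  exact prependC_dropC this

end Glue

end Stmt8Aux

open Stmt8Aux in
theorem stmt8 {X : Type u} [TopologicalSpace X] (hX : ZeroDimensional X)
    (P K : Set (X × (ℕ → ℕ))) (hP : IsCompact P) (hK : IsCompact K)
    (f : ↥P ≃ₜ ↥K) (g : X ≃ₜ X)
    (hfg : ∀ p : P, g ((p : X × (ℕ → ℕ)).1) = (f p : X × (ℕ → ℕ)).1)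
    -- `d` is a bounded complete metric on `ℕ^ℕ` inducing the product topology:
    (d : (ℕ → ℕ) → (ℕ → ℕ) → ℝ)
    (hd_eq : ∀ x y, d x y = 0 ↔ x = y)
    (hd_symm : ∀ x y, d x y = d y x)
    (hd_tri : ∀ x y z, d x z ≤ d x y + d y z)
    (hd_bdd : ∃ M, ∀ x y, d x y ≤ M)
    (hd_top : ∀ s : Set (ℕ → ℕ), IsOpen s ↔ ∀ x ∈ s, ∃ ε > 0, {y | d x y < ε} ⊆ s)
    (hd_complete : ∀ u : ℕ → ℕ → ℕ,
      (∀ ε > 0, ∃ N, ∀ m ≥ N, ∀ n ≥ N, d (u m) (u n) < ε) →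
      ∃ x, ∀ ε > 0, ∃ N, ∀ n ≥ N, d (u n) x < ε)
    -- `W` is a `d̃`-open set of autohomeomorphisms of `ℕ^ℕ`:
    (W : Set ((ℕ → ℕ) ≃ₜ (ℕ → ℕ)))
    (hW : ∀ h ∈ W, ∃ ε > 0, ∀ h', dTilde d h h' < ε → h' ∈ W) :
    -- `{x ∈ P_X : Φ(x) ∩ W ≠ ∅}` is open in `P_X`:
    ∃ U : Set X, IsOpen U ∧
      {x ∈ Prod.fst '' P | ∃ h ∈ W, ∀ (c : ℕ → ℕ) (hc : (x, c) ∈ P),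
          (f ⟨(x, c), hc⟩ : X × (ℕ → ℕ)) = (g x, h c)}
        = U ∩ (Prod.fst '' P) := by
  classical
  obtain ⟨Z', _, _, hT2', _, e, he, -⟩ := hX
  have hXT2 : T2Space X := he.t2Space
  -- basic facts about the metric `d`
  have hd_nonneg : ∀ u v, 0 ≤ d u v := by
    intro u v
    have h1 := hd_tri u v u
    rw [hd_symm v u] at h1
    have h2 : d u u = 0 := (hd_eq u u).2 rfl
    linarith
  have hball : ∀ u r, IsOpen {v | d u v < r} := by
    intro u r
    rw [hd_top]
    intro z hz
    have hz' : d u z < r := hz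
    refine ⟨r - d u z, by linarith, fun y hy => ?_⟩
    have hy' : d z y < r - d u z := hy
    have := hd_tri u z y
    show d u y < r
    linarith
  have hdc : Continuous (fun p : (ℕ → ℕ) × (ℕ → ℕ) => d p.1 p.2) := by
    rw [continuous_iff_continuousAt]
    intro p
    rw [ContinuousAt, Metric.tendsto_nhds]
    intro r hr
    have hmem : {q : (ℕ → ℕ) × (ℕ → ℕ) | d p.1 q.1 < r/2 ∧ d p.2 q.2 < r/2} ∈ 𝓝 p := by
      have ho : IsOpen {q : (ℕ → ℕ) × (ℕ → ℕ) | d p.1 q.1 < r/2 ∧ d p.2 q.2 < r/2} :=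
        ((hball p.1 (r/2)).preimage continuous_fst).inter
          ((hball p.2 (r/2)).preimage continuous_snd)
      refine ho.mem_nhds ?_
      constructor
      · show d p.1 p.1 < r/2
        rw [(hd_eq p.1 p.1).2 rfl]; linarith
      · show d p.2 p.2 < r/2
        rw [(hd_eq p.2 p.2).2 rfl]; linarith
    filter_upwards [hmem] with q hq
    rw [Real.dist_eq, abs_sub_lt_iff]
    obtain ⟨h1, h2⟩ := hq
    have t1 := hd_tri q.1 p.1 q.2
    have t2 := hd_tri p.1 p.2 q.2
    have t3 := hd_tri p.1 q.1 p.2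
    have t4 := hd_tri q.1 q.2 p.2
    have s1 := hd_symm q.1 p.1
    have s2 := hd_symm p.2 q.2
    have s3 := hd_symm q.2 p.2
    constructor <;> linarith
  -- the set in question
  set S := {x ∈ Prod.fst '' P | ∃ h ∈ W, ∀ (c : ℕ → ℕ) (hc : (x, c) ∈ P),
      (f ⟨(x, c), hc⟩ : X × (ℕ → ℕ)) = (g x, h c)} with hSdef
  have key : ∀ x₀ ∈ S, ∃ V : Set X, IsOpen V ∧ x₀ ∈ V ∧
      ∀ x, x ∈ V → x ∈ Prod.fst '' P → x ∈ S := by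
    intro x₀ hx₀
    obtain ⟨hx₀P, h₀, hh₀W, hh₀⟩ := hx₀
    obtain ⟨ε, hε, hεW⟩ := hW h₀ hh₀W
    set ε' := ε/3 with hε'def
    have hε' : 0 < ε' := by rw [hε'def]; linarith
    -- construction of the coded cylinder partition
    have hex : ∀ c, ∃ k, ∀ u ∈ PiNat.cylinder c k, ∀ v ∈ PiNat.cylinder c k,
        d u v ≤ ε' ∧ d (h₀ u) (h₀ v) ≤ ε' := by
      intro c
      have h1 : IsOpen ({v | d c v < ε'/2} ∩ ⇑h₀ ⁻¹' {v | d (h₀ c) v < ε'/2}) :=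
        (hball c (ε'/2)).inter ((hball (h₀ c) (ε'/2)).preimage h₀.continuous)
      have hc0 : c ∈ ({v | d c v < ε'/2} ∩ ⇑h₀ ⁻¹' {v | d (h₀ c) v < ε'/2}) := by
        constructor
        · show d c c < ε'/2; rw [(hd_eq c c).2 rfl]; linarith
        · show d (h₀ c) (h₀ c) < ε'/2; rw [(hd_eq _ _).2 rfl]; linarith
      obtain ⟨k, hk⟩ := exists_cylinder_subset h1 hc0
      refine ⟨k, fun u hu v hv => ?_⟩
      obtain ⟨hu1, hu2⟩ := hk hu
      obtain ⟨hv1, hv2⟩ := hk hv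
      have hu1' : d c u < ε'/2 := hu1
      have hv1' : d c v < ε'/2 := hv1
      have hu2' : d (h₀ c) (h₀ u) < ε'/2 := hu2
      have hv2' : d (h₀ c) (h₀ v) < ε'/2 := hv2
      constructor
      · have := hd_tri u c v
        have := hd_symm u c
        linarith
      · have := hd_tri (h₀ u) (h₀ c) (h₀ v)
        have := hd_symm (h₀ u) (h₀ c)
        linarith
    set kf : (ℕ → ℕ) → ℕ := fun c => Nat.find (hex c) with hkf
    set code : (ℕ → ℕ) → ℕ × (ℕ → ℕ) :=
      fun c => (kf c, fun j => if j < kf c then c j else 0) with hcode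
    have hcyl_congr : ∀ (z w : ℕ → ℕ) (k : ℕ), w ∈ PiNat.cylinder z k →
        PiNat.cylinder w k = PiNat.cylinder z k := fun z w k h =>
      PiNat.mem_cylinder_iff_eq.1 h
    have hkf_eq : ∀ z w, w ∈ PiNat.cylinder z (kf z) → kf w = kf z := by
      intro z w hw
      have h1 : kf w ≤ kf z := by
        apply Nat.find_le
        rw [hcyl_congr z w (kf z) hw]
        exact Nat.find_spec (hex z)
      have h2 : kf z ≤ kf w := by
        apply Nat.find_le
        have hw' : w ∈ PiNat.cylinder z (kf w) := PiNat.cylinder_anti z h1 hw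
        rw [← hcyl_congr z w (kf w) hw']
        exact Nat.find_spec (hex w)
      omega
    have hC1 : ∀ z, z ∈ cellSet (code z) := by
      intro z j hj
      exact (if_pos hj).symm
    have hmemcyl : ∀ z w, w ∈ cellSet (code z) → w ∈ PiNat.cylinder z (kf z) := by
      intro z w hw j hj
      have h := hw j hj
      exact h.trans (if_pos hj)
    have hC2 : ∀ z w, w ∈ cellSet (code z) → code w = code z := by
      intro z w hw
      have hwz := hmemcyl z w hw
      have hk := hkf_eq z w hwz
      refine Prod.ext hk ?_
      funext j
      show (if j < kf w then w j else 0) = (if j < kf z then z j else 0)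
      rw [hk]
      by_cases hj : j < kf z
      · rw [if_pos hj, if_pos hj, hwz j hj]
      · rw [if_neg hj, if_neg hj]
    have hest : ∀ z w, code w = code z → d z w ≤ ε' ∧ d (h₀ z) (h₀ w) ≤ ε' := by
      intro z w hcw
      have hk : kf w = kf z := congrArg Prod.fst hcw
      have hsnd := congrArg Prod.snd hcw
      have hwz : w ∈ PiNat.cylinder z (kf z) := by
        intro j hj
        have h1 : (if j < kf w then w j else 0) = (if j < kf z then z j else 0) :=
          congrFun hsnd j
        rw [hk] at h1
        rw [if_pos hj, if_pos hj] at h1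
        exact h1
      exact Nat.find_spec (hex z) z (PiNat.self_mem_cylinder z (kf z)) w hwz
    -- the fixed compact set
    set Q2 : Set (ℕ → ℕ) := Prod.snd '' P ∪ (⇑h₀.symm '' (Prod.snd '' K)) with hQ2def
    have hQ2 : IsCompact Q2 :=
      (hP.image continuous_snd).union ((hK.image continuous_snd).image h₀.symm.continuous)
    -- the Lebesgue-type number δ
    obtain ⟨δ, hδpos, hδ⟩ : ∃ δ > 0, ∀ u ∈ Q2, ∀ v ∈ Q2, d u v < δ → code u = code v := by
      set R := (Q2 ×ˢ Q2) ∩ {p : (ℕ → ℕ) × (ℕ → ℕ) | code p.1 ≠ code p.2} with hRdef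
      have hRclosed : IsClosed {p : (ℕ → ℕ) × (ℕ → ℕ) | code p.1 ≠ code p.2} := by
        rw [← isOpen_compl_iff, isOpen_iff_mem_nhds]
        intro p hp
        rw [mem_nhds_iff]
        refine ⟨cellSet (code p.1) ×ˢ cellSet (code p.2), ?_,
          (isOpen_cellSet _).prod (isOpen_cellSet _), ⟨hC1 p.1, hC1 p.2⟩⟩
        rintro q ⟨hq1, hq2⟩
        simp only [Set.mem_compl_iff, Set.mem_setOf_eq, not_not]
        rw [hC2 p.1 q.1 hq1, hC2 p.2 q.2 hq2]
        simpa using hp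
      have hRc : IsCompact R := (hQ2.prod hQ2).inter_right hRclosed
      rcases R.eq_empty_or_nonempty with hRe | hRne
      · refine ⟨1, one_pos, fun u hu v hv _ => ?_⟩
        by_contra hne
        have : (u, v) ∈ R := ⟨⟨hu, hv⟩, hne⟩
        rw [hRe] at this
        exact this
      · obtain ⟨p₀, hp₀R, hp₀min⟩ := hRc.exists_isMinOn hRne hdc.continuousOn
        refine ⟨d p₀.1 p₀.2, ?_, ?_⟩
        · have hne : p₀.1 ≠ p₀.2 := by
            intro hcontra
            exact hp₀R.2 (by rw [hcontra])
          have h0 : d p₀.1 p₀.2 ≠ 0 := fun hc => hne ((hd_eq _ _).1 hc)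
          have := hd_nonneg p₀.1 p₀.2
          rcases lt_or_eq_of_le this with h | h
          · exact h
          · exact absurd h.symm h0
        · intro u hu v hv hduv
          by_contra hne
          have hmemR : (u, v) ∈ R := ⟨⟨hu, hv⟩, hne⟩
          have := hp₀min hmemR
          simp only [Set.mem_setOf_eq] at this
          exact absurd hduv (not_lt.2 this)
    -- the open neighborhood V of x₀
    haveI : CompactSpace ↥P := isCompact_iff_compactSpace.1 hP
    set Fq : ↥P → ℝ :=
      fun q => d (q : X × (ℕ → ℕ)).2 (h₀.symm ((f q : X × (ℕ → ℕ)).2)) with hFq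
    have hFqc : Continuous Fq := by
      have h1 : Continuous (fun q : ↥P =>
          (((q : X × (ℕ → ℕ)).2, h₀.symm ((f q : X × (ℕ → ℕ)).2)) : (ℕ → ℕ) × (ℕ → ℕ))) :=
        (continuous_snd.comp continuous_subtype_val).prodMk
          (h₀.symm.continuous.comp
            (continuous_snd.comp (continuous_subtype_val.comp f.continuous)))
      exact hdc.comp h1
    set Cl : Set ↥P := {q | δ ≤ Fq q} with hCl
    have hClclosed : IsClosed Cl := isClosed_le continuous_const hFqc
    have hClc : IsCompact Cl := hClclosed.isCompact
    set V : Set X := ((fun q : ↥P => (q : X × (ℕ → ℕ)).1) '' Cl)ᶜ with hV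
    have hVopen : IsOpen V :=
      (hClc.image (continuous_fst.comp continuous_subtype_val)).isClosed.isOpen_compl
    have hx₀V : x₀ ∈ V := by
      intro hmem
      obtain ⟨q, hqCl, hq1⟩ := hmem
      have hq : q = ⟨(x₀, (q : X × (ℕ → ℕ)).2), by rw [← hq1]; exact q.2⟩ := by
        apply Subtype.ext
        exact Prod.ext hq1 rfl
      have hfq : (f q : X × (ℕ → ℕ)).2 = h₀ (q : X × (ℕ → ℕ)).2 := by
        conv_lhs => rw [hq]
        rw [hh₀ (q : X × (ℕ → ℕ)).2 (by rw [← hq1]; exact q.2)]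
      have : Fq q = 0 := by
        rw [hFq]
        simp only []
        rw [hfq, Homeomorph.symm_apply_apply]
        exact (hd_eq _ _).2 rfl
      have := hqCl
      rw [hCl] at this
      simp only [Set.mem_setOf_eq] at this
      rw [‹Fq q = 0›] at this
      linarith
    refine ⟨V, hVopen, hx₀V, ?_⟩
    intro x hxV hxP
    -- the fiber over x
    set A : Set (ℕ → ℕ) := {c | (x, c) ∈ P} with hA
    have hAclosed : IsClosed A :=
      hP.isClosed.preimage (continuous_const.prodMk continuous_id)
    have hAsub : A ⊆ Prod.snd '' P := fun c hc => ⟨(x, c), hc, rfl⟩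
    have hAc : IsCompact A :=
      (hP.image continuous_snd).of_isClosed_subset hAclosed hAsub
    set ψ : (ℕ → ℕ) → (ℕ → ℕ) := fun c =>
      if h : (x, c) ∈ P then h₀.symm ((f ⟨(x, c), h⟩ : X × (ℕ → ℕ)).2) else c with hψ
    have hψval : ∀ c (hc : (x, c) ∈ P),
        ψ c = h₀.symm ((f ⟨(x, c), hc⟩ : X × (ℕ → ℕ)).2) := by
      intro c hc
      rw [hψ]
      simp only [dif_pos hc]
    have hψc : ContinuousOn ψ A := by
      rw [continuousOn_iff_continuous_restrict]
      have : A.domRestrict ψ = fun c : ↥A =>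
          h₀.symm ((f ⟨(x, (c : ℕ → ℕ)), c.2⟩ : X × (ℕ → ℕ)).2) := by
        funext c
        exact hψval c c.2
      rw [this]
      apply h₀.symm.continuous.comp
      apply continuous_snd.comp
      apply continuous_subtype_val.comp
      apply f.continuous.comp
      exact Continuous.subtype_mk (continuous_const.prodMk continuous_subtype_val) _
    have hψi : Set.InjOn ψ A := by
      intro a₁ ha₁ a₂ ha₂ heq
      rw [hψval a₁ ha₁, hψval a₂ ha₂] at heq
      have h2 : (f ⟨(x, a₁), ha₁⟩ : X × (ℕ → ℕ)).2 = (f ⟨(x, a₂), ha₂⟩ : X × (ℕ → ℕ)).2 :=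
        h₀.symm.injective heq
      have h1 : (f ⟨(x, a₁), ha₁⟩ : X × (ℕ → ℕ)).1 = (f ⟨(x, a₂), ha₂⟩ : X × (ℕ → ℕ)).1 := by
        rw [← hfg ⟨(x, a₁), ha₁⟩, ← hfg ⟨(x, a₂), ha₂⟩]
      have hfeq : f ⟨(x, a₁), ha₁⟩ = f ⟨(x, a₂), ha₂⟩ :=
        Subtype.ext (Prod.ext h1 h2)
      have := f.injective hfeq
      have := congrArg (fun p : ↥P => (p : X × (ℕ → ℕ)).2) this
      exact this
    have haQ2 : ∀ a ∈ A, a ∈ Q2 := fun a ha => Or.inl (hAsub ha)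
    have hψQ2 : ∀ a ∈ A, ψ a ∈ Q2 := by
      intro a ha
      rw [hψval a ha]
      exact Or.inr ⟨(f ⟨(x, a), ha⟩ : X × (ℕ → ℕ)).2,
        ⟨(f ⟨(x, a), ha⟩ : X × (ℕ → ℕ)), (f ⟨(x, a), ha⟩).2, rfl⟩, rfl⟩
    have hclose : ∀ a ∈ A, d a (ψ a) < δ := by
      intro a ha
      by_contra hge
      have hge' : δ ≤ d a (ψ a) := not_lt.1 hge
      have hqCl : (⟨(x, a), ha⟩ : ↥P) ∈ Cl := by
        rw [hCl]
        show δ ≤ Fq ⟨(x, a), ha⟩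
        rw [hFq]
        simp only []
        rw [← hψval a ha]
        exact hge'
      exact hxV ⟨⟨(x, a), ha⟩, hqCl, rfl⟩
    have hpres : ∀ a ∈ A, code (ψ a) = code a := by
      intro a ha
      exact (hδ a (haQ2 a ha) (ψ a) (hψQ2 a ha) (hclose a ha)).symm
    obtain ⟨Ψ, hΨe, hΨpres⟩ := glue_extension code hC1 hC2 hAc hψc hψi hpres
    set h' := Ψ.trans h₀ with hh'
    have hh'W : h' ∈ W := by
      apply hεW
      rw [dTilde]
      have hsup1 : (⨆ c, d (h₀ c) (h' c)) ≤ ε' := by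
        apply ciSup_le
        intro c
        have : code (Ψ c) = code c := hΨpres c
        exact (hest c (Ψ c) this).2
      have hsup2 : (⨆ c, d (h₀.symm c) (h'.symm c)) ≤ ε' := by
        apply ciSup_le
        intro c
        have hval : h'.symm c = Ψ.symm (h₀.symm c) := rfl
        rw [hval]
        have h1 : code (Ψ (Ψ.symm (h₀.symm c))) = code (Ψ.symm (h₀.symm c)) :=
          hΨpres (Ψ.symm (h₀.symm c))
        rw [Homeomorph.apply_symm_apply] at h1
        exact (hest (h₀.symm c) (Ψ.symm (h₀.symm c)) h1.symm).1
      have : (⨆ c, d (h₀ c) (h' c)) + (⨆ c, d (h₀.symm c) (h'.symm c)) ≤ ε' + ε' :=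
        add_le_add hsup1 hsup2
      have h3 : ε' + ε' < ε := by rw [hε'def]; linarith
      linarith
    refine ⟨hxP, h', hh'W, ?_⟩
    intro c hc
    have hcA : c ∈ A := hc
    refine Prod.ext ?_ ?_
    · exact (hfg ⟨(x, c), hc⟩).symm
    · show (f ⟨(x, c), hc⟩ : X × (ℕ → ℕ)).2 = h' c
      have h1 : h' c = h₀ (Ψ c) := rfl
      rw [h1, hΨe c hcA, hψval c hc, Homeomorph.apply_symm_apply]
  -- assembling the open set
  choose! V hV1 hV2 hV3 using key
  refine ⟨⋃ x₀ ∈ S, V x₀, ?_, ?_⟩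
  · exact isOpen_iUnion fun x₀ => isOpen_iUnion fun hx₀ => hV1 x₀ hx₀
  · apply Set.Subset.antisymm
    · intro x hx
      exact ⟨Set.mem_biUnion hx (hV2 x hx), hx.1⟩
    · rintro x ⟨hxU, hxP⟩
      obtain ⟨x₀, hx₀S, hxV⟩ := Set.mem_iUnion₂.1 hxU
      exact hV3 x₀ hx₀S x hxV hxP
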